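/- Let p ∈ (0,1] and θ ∈ (−π, π/2], or p ∈ (1,2] and θ ∈ (−π, 0], with (p,θ) ≠ (2,0). Then the supremum A_{p,θ} of (cos θ − cos x)/(x − θ)^p over x ∈ (θ, π) is attained at exactly one point of (θ, π), namely at x = φ_p(θ), and A_{p,θ} = sin φ_p(θ) / (p·(φ_p(θ) − θ)^{p−1}). -/

import Mathlib

/-- The set of values `(cos θ - cos x)/(x - θ)^p` for `x ∈ (θ, π)`. -/
noncomputable def Aset (p θ : ℝ) : Set ℝ :=
  (fun x : ℝ => (Real.cos θ - Real.cos x) / (x - θ) ^ p) '' Set.Ioo θ Real.pi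

/-- `A p θ` is the supremum of `(cos θ - cos x)/(x - θ)^p` over `x ∈ (θ, π)`. -/
noncomputable def A (p θ : ℝ) : ℝ := sSup (Aset p θ)

/-- The parameter domain: `p ∈ (0,1]` and `θ ∈ (−π, π/2]`, or `p ∈ (1,2]` and `θ ∈ (−π, 0]`. -/
def Dom (p θ : ℝ) : Prop :=
  (p ∈ Set.Ioc (0 : ℝ) 1 ∧ θ ∈ Set.Ioc (-Real.pi) (Real.pi / 2)) ∨
  (p ∈ Set.Ioc (1 : ℝ) 2 ∧ θ ∈ Set.Ioc (-Real.pi) 0)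

open Real Set

private lemma aux1 (p a sa sb : ℝ) (hp1 : p ≤ 1) (ha0 : 0 < a)
    (hsa : 0 < sa) (hsb : 0 < sb) (hsa' : sa < a) :
    p * (2 * sa * sb)^2 < (sa^2 + sb^2) * (2*a)^2 := by
  have h1 : 0 < (a^2 - sa^2) * (sb*sb) :=
    mul_pos (by nlinarith) (mul_pos hsb hsb)
  nlinarith [sq_nonneg (2*sa*sb), sq_nonneg a, sq_nonneg sa, mul_pos ha0 ha0]

private lemma aux2 (p a sa sb : ℝ) (hp2 : p ≤ 2) (ha0 : 0 < a)
    (hsa : 0 < sa) (hsb : 0 < sb) (hsa' : sa < a) (hsba : sb ≤ a) :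
    p * (2 * sa * sb)^2 < (sa^2 + sb^2) * (2*a)^2 := by
  have h1 : 0 < (a^2 - sa^2) * (sb*sb) :=
    mul_pos (by nlinarith) (mul_pos hsb hsb)
  have h2 : 0 ≤ (a^2 - sb^2) * (sa*sa) :=
    mul_nonneg (by nlinarith) (by positivity)
  nlinarith [sq_nonneg (2*sa*sb)]

private lemma key_ineq (p θ x : ℝ)
    (hcase : p ≤ 1 ∨ (p ≤ 2 ∧ θ ≤ 0)) (hθl : -π < θ) (hθu : θ ≤ π/2)
    (hx1 : |θ| < x) (hx2 : x < π) :
    p * (cos θ - cos x)^2 < (1 - cos θ * cos x) * (x - θ)^2 := by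
  have hθa : θ ≤ |θ| := le_abs_self θ
  have hθa' : -θ ≤ |θ| := neg_le_abs θ
  set a := (x - θ)/2 with ha
  set b := (x + θ)/2 with hb
  have ha0 : 0 < a := by simp only [ha]; linarith
  have hb0 : 0 < b := by simp only [hb]; linarith
  have haπ : a < π := by simp only [ha]; linarith
  have hbπ : b < π := by simp only [hb]; nlinarith [pi_pos]
  have hsa : 0 < sin a := sin_pos_of_pos_of_lt_pi ha0 haπ
  have hsb : 0 < sin b := sin_pos_of_pos_of_lt_pi hb0 hbπ
  have hsa' : sin a < a := sin_lt ha0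
  have hθeq : θ = b - a := by simp only [ha, hb]; ring
  have hxeq : x = b + a := by simp only [ha, hb]; ring
  have h1 : cos θ - cos x = 2 * sin a * sin b := by
    rw [cos_sub_cos]
    rw [show (θ + x)/2 = b by rw [hθeq, hxeq]; ring,
        show (θ - x)/2 = -a by rw [hθeq, hxeq]; ring, sin_neg]
    ring
  have h2 : 1 - cos θ * cos x = sin a ^ 2 + sin b ^ 2 := by
    rw [hθeq, hxeq, cos_add, cos_sub]
    nlinarith [sin_sq_add_cos_sq a, sin_sq_add_cos_sq b]
  have hxθ : x - θ = 2 * a := by rw [ha]; ring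
  rw [h1, h2, hxθ]
  rcases hcase with hp1 | ⟨hp2, hθ0⟩
  · exact aux1 p a (sin a) (sin b) hp1 ha0 hsa hsb hsa'
  · have hba : b ≤ a := by simp only [ha, hb]; linarith
    exact aux2 p a (sin a) (sin b) hp2 ha0 hsa hsb hsa'
      (le_trans (Real.sin_le hb0.le) hba)

private noncomputable def LL (p θ x : ℝ) : ℝ := sin x / (cos θ - cos x) - p / (x - θ)

private lemma cos_lt' (θ x : ℝ) (hx1 : |θ| < x) (hx2 : x ≤ π) : cos x < cos θ := by
  have := cos_lt_cos_of_nonneg_of_le_pi (abs_nonneg θ) hx2 hx1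
  rwa [cos_abs] at this

private lemma LL_hasDeriv (p θ x : ℝ) (hθ : θ < x) (hc : cos x < cos θ) :
    HasDerivAt (LL p θ)
      ((cos θ * cos x - 1) / (cos θ - cos x)^2 + p / (x - θ)^2) x := by
  have hc0 : cos θ - cos x ≠ 0 := by linarith
  have hx0 : x - θ ≠ 0 := by linarith
  have h1 : HasDerivAt (fun y => sin y / (cos θ - cos y))
      ((cos x * (cos θ - cos x) - sin x * sin x) / (cos θ - cos x)^2) x :=
    (hasDerivAt_sin x).div (by simpa using (hasDerivAt_cos x).const_sub (cos θ)) hc0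
  have h2 : HasDerivAt (fun y => p / (y - θ))
      ((0 * (x - θ) - p * 1) / (x - θ)^2) x :=
    (hasDerivAt_const x p).div ((hasDerivAt_id x).sub_const θ) hx0
  have h3 := h1.sub h2
  refine h3.congr_deriv ?_
  have h4 : cos x * (cos θ - cos x) - sin x * sin x = cos θ * cos x - 1 := by
    nlinarith [sin_sq_add_cos_sq x]
  rw [h4]; ring

private lemma LL_anti (p θ : ℝ)
    (hcase : p ≤ 1 ∨ (p ≤ 2 ∧ θ ≤ 0)) (hθl : -π < θ) (hθu : θ ≤ π/2) :
    StrictAntiOn (LL p θ) (Ioo |θ| π) := by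
  have hmem : ∀ x ∈ Ioo |θ| π, θ < x ∧ cos x < cos θ := fun x hx =>
    ⟨lt_of_le_of_lt (le_abs_self θ) hx.1, cos_lt' θ x hx.1 hx.2.le⟩
  refine strictAntiOn_of_deriv_neg (convex_Ioo _ _) ?_ ?_
  · intro x hx
    obtain ⟨h1, h2⟩ := hmem x hx
    exact (LL_hasDeriv p θ x h1 h2).differentiableAt.continuousAt.continuousWithinAt
  · intro x hx
    rw [interior_Ioo] at hx
    obtain ⟨h1, h2⟩ := hmem x hx
    rw [(LL_hasDeriv p θ x h1 h2).deriv]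
    have hk := key_ineq p θ x hcase hθl hθu hx.1 hx.2
    have hc : 0 < cos θ - cos x := by linarith
    have hd : 0 < x - θ := by linarith
    have heq : (cos θ * cos x - 1)/(cos θ - cos x)^2 + p/(x - θ)^2 =
        ((cos θ * cos x - 1)*(x - θ)^2 + p*(cos θ - cos x)^2) /
          ((cos θ - cos x)^2 * (x - θ)^2) := by
      field_simp
    rw [heq]
    apply div_neg_of_neg_of_pos (by nlinarith) (by positivity)

private lemma fA_hasDeriv (p θ x : ℝ) (hθ : θ < x) :
    HasDerivAt (fun y => (cos θ - cos y)/(y - θ)^p)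
      (((x - θ)*sin x - p*(cos θ - cos x)) * (x - θ)^(p-1) / ((x - θ)^p)^2) x := by
  have hx0 : (0:ℝ) < x - θ := by linarith
  have hd : HasDerivAt (fun y => (y - θ)^p) (1 * p * (x - θ)^(p-1)) x :=
    ((hasDerivAt_id x).sub_const θ).rpow_const (Or.inl (ne_of_gt hx0))
  have hn : HasDerivAt (fun y => cos θ - cos y) (sin x) x := by
    simpa using (hasDerivAt_cos x).const_sub (cos θ)
  have h3 := hn.div hd (ne_of_gt (rpow_pos_of_pos hx0 p))
  refine h3.congr_deriv ?_
  have hsplit : (x - θ)^p = (x - θ)^(p-1) * (x - θ) := by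
    have h := Real.rpow_add_one (ne_of_gt hx0) (p-1)
    rwa [sub_add_cancel] at h
  rw [hsplit]; ring

/-- The main comparison: `f x < f φ` for `x ≠ φ`. -/
private lemma f_lt (p θ φ : ℝ) (hp0 : 0 < p)
    (hcase : p ≤ 1 ∨ (p ≤ 2 ∧ θ ≤ 0)) (hθl : -π < θ) (hθu : θ ≤ π/2)
    (hφ1 : |θ| < φ) (hφ2 : φ < π)
    (heq : p * (cos φ - cos θ) + (φ - θ) * sin φ = 0) :
    ∀ x ∈ Ioo θ π, x ≠ φ →
      (cos θ - cos x)/(x - θ)^p < (cos θ - cos φ)/(φ - θ)^p := by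
  have hθφ : θ < φ := lt_of_le_of_lt (le_abs_self θ) hφ1
  have hcφ : cos φ < cos θ := cos_lt' θ φ hφ1 hφ2.le
  have hfφ : 0 < (cos θ - cos φ)/(φ - θ)^p :=
    div_pos (by linarith) (rpow_pos_of_pos (by linarith) p)
  have hLφ : LL p θ φ = 0 := by
    unfold LL
    rw [sub_eq_zero, div_eq_div_iff (by linarith) (by linarith)]
    nlinarith
  have hanti := LL_anti p θ hcase hθl hθu
  have hφmem : φ ∈ Ioo |θ| π := ⟨hφ1, hφ2⟩
  -- derivative sign on (|θ|, π)
  have hderiv : ∀ y ∈ Ioo |θ| π, y ≠ φ →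
      (y < φ → 0 < deriv (fun z => (cos θ - cos z)/(z - θ)^p) y) ∧
      (φ < y → deriv (fun z => (cos θ - cos z)/(z - θ)^p) y < 0) := by
    intro y hy hyne
    have hθy : θ < y := lt_of_le_of_lt (le_abs_self θ) hy.1
    have hcy : cos y < cos θ := cos_lt' θ y hy.1 hy.2.le
    have hD := (fA_hasDeriv p θ y hθy).deriv
    have hcy0 : cos θ - cos y ≠ 0 := by linarith
    have hy0 : y - θ ≠ 0 := by linarith
    have hid : (y - θ)*sin y - p*(cos θ - cos y) =
        ((y - θ)*(cos θ - cos y)) * LL p θ y := by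
      unfold LL
      field_simp
    have hpos : 0 < (y - θ)*(cos θ - cos y) := mul_pos (by linarith) (by linarith)
    have hden : 0 < ((y - θ)^p)^2 := pow_pos (rpow_pos_of_pos (by linarith) p) 2
    have hrp : 0 < (y - θ)^(p-1) := rpow_pos_of_pos (by linarith) _
    constructor
    · intro hlt
      have hL : 0 < LL p θ y := by
        have := hanti hy hφmem hlt
        rwa [hLφ] at this
      rw [hD, hid]
      exact div_pos (mul_pos (mul_pos hpos hL) hrp) hden
    · intro hgt
      have hL : LL p θ y < 0 := by
        have := hanti hφmem hy hgt
        rwa [hLφ] at this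
      rw [hD, hid]
      apply div_neg_of_neg_of_pos _ hden
      apply mul_neg_of_neg_of_pos _ hrp
      exact mul_neg_of_pos_of_neg hpos hL
  intro x hx hne
  by_cases hxlo : x ≤ |θ|
  · -- here f x ≤ 0 < f φ
    have hcx : cos θ ≤ cos x := by
      have h1 : |x| ≤ |θ| := abs_le.2 ⟨by linarith [neg_abs_le θ, hx.1], hxlo⟩
      calc cos θ = cos |θ| := (cos_abs θ).symm
        _ ≤ cos |x| := cos_le_cos_of_nonneg_of_le_pi (abs_nonneg x)
            (by linarith [hφ2, le_abs_self θ, abs_nonneg θ, pi_pos]) h1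
        _ = cos x := cos_abs x
    have : (cos θ - cos x)/(x - θ)^p ≤ 0 :=
      div_nonpos_of_nonpos_of_nonneg (by linarith)
        (le_of_lt (rpow_pos_of_pos (by linarith [hx.1]) p))
    linarith
  · push_neg at hxlo
    have hxmem : x ∈ Ioo |θ| π := ⟨hxlo, hx.2⟩
    have hcont : ∀ y ∈ Icc (min x φ) (max x φ),
        ContinuousWithinAt (fun z => (cos θ - cos z)/(z - θ)^p)
          (Icc (min x φ) (max x φ)) y := by
      intro y hy
      have hθy : θ < y := by
        rcases le_or_gt x φ with h | h
        · have := hy.1; rw [min_eq_left h] at this; linarith [hxlo, le_abs_self θ]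
        · have := hy.1; rw [min_eq_right h.le] at this; linarith [hφ1, le_abs_self θ]
      exact (fA_hasDeriv p θ y hθy).differentiableAt.continuousAt.continuousWithinAt
    rcases lt_or_gt_of_ne hne with hlt | hgt
    · have hmin : min x φ = x := min_eq_left hlt.le
      have hmax : max x φ = φ := max_eq_right hlt.le
      rw [hmin, hmax] at hcont
      have hmono : StrictMonoOn (fun z => (cos θ - cos z)/(z - θ)^p) (Icc x φ) := by
        refine strictMonoOn_of_deriv_pos (convex_Icc _ _) hcont ?_
        intro y hy
        rw [interior_Icc] at hy
        have hymem : y ∈ Ioo |θ| π := ⟨lt_trans hxlo hy.1, lt_trans hy.2 hφ2⟩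
        exact (hderiv y hymem (ne_of_lt hy.2)).1 hy.2
      exact hmono (left_mem_Icc.2 hlt.le) (right_mem_Icc.2 hlt.le) hlt
    · have hmin : min x φ = φ := min_eq_right hgt.le
      have hmax : max x φ = x := max_eq_left hgt.le
      rw [hmin, hmax] at hcont
      have hmono : StrictAntiOn (fun z => (cos θ - cos z)/(z - θ)^p) (Icc φ x) := by
        refine strictAntiOn_of_deriv_neg (convex_Icc _ _) hcont ?_
        intro y hy
        rw [interior_Icc] at hy
        have hymem : y ∈ Ioo |θ| π := ⟨lt_trans hφ1 hy.1, lt_trans hy.2 hx.2⟩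
        exact (hderiv y hymem (ne_of_gt hy.1)).2 hy.1
      exact hmono (left_mem_Icc.2 hgt.le) (right_mem_Icc.2 hgt.le) hgt

theorem stmt2 (p θ φ : ℝ) (h : Dom p θ) (hne : (p, θ) ≠ ((2 : ℝ), (0 : ℝ)))
    (hφ : φ ∈ Set.Ioo |θ| Real.pi ∧
      p * (Real.cos φ - Real.cos θ) + (φ - θ) * Real.sin φ = 0) :
    (∀ x ∈ Set.Ioo θ Real.pi,
        ((Real.cos θ - Real.cos x) / (x - θ) ^ p = A p θ ↔ x = φ)) ∧
    A p θ = Real.sin φ / (p * (φ - θ) ^ (p - 1)) := by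
  obtain ⟨⟨hφ1, hφ2⟩, heq⟩ := hφ
  have hp0 : 0 < p := by rcases h with ⟨⟨h1, _⟩, _⟩ | ⟨⟨h1, _⟩, _⟩ <;> linarith [h1]
  have hθl : -π < θ := by rcases h with ⟨_, ⟨h1, _⟩⟩ | ⟨_, ⟨h1, _⟩⟩ <;> linarith
  have hθu : θ ≤ π/2 := by
    rcases h with ⟨_, ⟨_, h1⟩⟩ | ⟨_, ⟨_, h1⟩⟩
    · exact h1
    · linarith [pi_pos]
  have hcase : p ≤ 1 ∨ (p ≤ 2 ∧ θ ≤ 0) := by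
    rcases h with ⟨⟨_, h1⟩, _⟩ | ⟨⟨_, h1⟩, ⟨_, h2⟩⟩
    · exact Or.inl h1
    · exact Or.inr ⟨h1, h2⟩
  have hθφ : θ < φ := lt_of_le_of_lt (le_abs_self θ) hφ1
  have hcφ : cos φ < cos θ := cos_lt' θ φ hφ1 hφ2.le
  have hlt := f_lt p θ φ hp0 hcase hθl hθu hφ1 hφ2 heq
  have hgreat : IsGreatest (Aset p θ) ((cos θ - cos φ)/(φ - θ)^p) := by
    constructor
    · exact ⟨φ, ⟨hθφ, hφ2⟩, rfl⟩
    · rintro y ⟨x, hx, rfl⟩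
      by_cases hxφ : x = φ
      · subst hxφ; exact le_refl _
      · exact (hlt x hx hxφ).le
  have hA : A p θ = (cos θ - cos φ)/(φ - θ)^p := hgreat.csSup_eq
  have hval : (cos θ - cos φ)/(φ - θ)^p = sin φ / (p * (φ - θ)^(p-1)) := by
    have h1 : (φ - θ)^p = (φ - θ)^(p-1) * (φ - θ) := by
      have h := Real.rpow_add_one (ne_of_gt (by linarith : (0:ℝ) < φ - θ)) (p-1)
      rwa [sub_add_cancel] at h
    have h2 : p * (cos θ - cos φ) = (φ - θ) * sin φ := by linarith
    have hrp : (0:ℝ) < (φ - θ)^(p-1) := rpow_pos_of_pos (by linarith) _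
    rw [h1]
    rw [div_eq_div_iff (ne_of_gt (mul_pos hrp (by linarith))) (ne_of_gt (mul_pos hp0 hrp))]
    linear_combination ((φ - θ)^(p-1)) * h2
  refine ⟨?_, by rw [hA]; exact hval⟩
  intro x hx
  constructor
  · intro hfx
    by_contra hxφ
    have := hlt x hx hxφ
    rw [hfx, hA] at this
    exact lt_irrefl _ this
  · rintro rfl
    rw [hA]
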